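/- arXiv:1807.04428 — 2 statements merged into one kernel-verified Lean document; each statement's English description precedes it below -/
import Mathlib

section
/- (Expected ascent of BCM under importance sampling, one step.) Assume A ≠ 0 and let σ ∈ M_r be such that Σ_{j=1}^n ‖g_j(σ)‖ > 0. With sampling probabilities p_i = ‖g_i(σ)‖ / Σ_{j=1}^n ‖g_j(σ)‖, one has Σ_{i=1}^n p_i f(T_i(σ)) − f(σ) ≥ ‖grad f(σ)‖_F² / (2 ‖A‖_{1,1}), where ‖A‖_{1,1} = Σ_{i,j=1}^n |A_{ij}|. -/
open scoped BigOperators RealInnerProductSpace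
open Finset Matrix

noncomputable section

/-- Points on the sphere live in Euclidean space `ℝ^r`. -/
abbrev Pt (r : ℕ) := EuclideanSpace ℝ (Fin r)

/-- A configuration: `n` rows, each a vector in `ℝ^r`. -/
abbrev Conf (n r : ℕ) := Fin n → Pt r

/-- Membership in the manifold `M_r`: all rows are unit vectors. -/
def inM {n r : ℕ} (σ : Conf n r) : Prop := ∀ i, ‖σ i‖ = 1

/-- `g_i(σ) = ∑_{j ≠ i} A_{ij} σ_j`. -/
def gvec {n r : ℕ} (A : Matrix (Fin n) (Fin n) ℝ) (σ : Conf n r) (i : Fin n) : Pt r :=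
  ∑ j ∈ univ.erase i, A i j • σ j

/-- The objective `f(σ) = ⟨A, σσᵀ⟩ = ∑_{i,j} A_{ij} ⟨σ_i, σ_j⟩`. -/
def fval {n r : ℕ} (A : Matrix (Fin n) (Fin n) ℝ) (σ : Conf n r) : ℝ :=
  ∑ i, ∑ j, A i j * ⟪σ i, σ j⟫

/-- The BCM update `T_i(σ)`: replace row `i` by `g_i(σ)/‖g_i(σ)‖`
    (unchanged if `g_i(σ) = 0`). -/
def Tupd {n r : ℕ} (A : Matrix (Fin n) (Fin n) ℝ) (σ : Conf n r) (i : Fin n) : Conf n r :=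
  letI := Classical.dec (gvec A σ i = 0)
  Function.update σ i (if gvec A σ i = 0 then σ i else ‖gvec A σ i‖⁻¹ • gvec A σ i)

/-- `‖A‖₁ = max_j ∑_i |A_{ij}|`. -/
def Anorm1 {n : ℕ} (A : Matrix (Fin n) (Fin n) ℝ) : ℝ := ⨆ j, ∑ i, |A i j|

/-- `‖A‖_{1,1} = ∑_{i,j} |A_{ij}|`. -/
def Anorm11 {n : ℕ} (A : Matrix (Fin n) (Fin n) ℝ) : ℝ := ∑ i, ∑ j, |A i j|

/-- Squared Riemannian gradient norm
    `‖grad f(σ)‖_F² = 2 ∑_i (‖g_i‖² − ⟨σ_i, g_i⟩²)`. -/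
def gradNormSq {n r : ℕ} (A : Matrix (Fin n) (Fin n) ℝ) (σ : Conf n r) : ℝ :=
  2 * ∑ i, (‖gvec A σ i‖ ^ 2 - ⟪σ i, gvec A σ i⟫ ^ 2)

/-- The geodesic through `σ` in direction `u`, at time `t`:
    `σ_i(t) = σ_i cos(‖u_i‖ t) + (u_i/‖u_i‖) sin(‖u_i‖ t)` (rows with `u_i = 0` stay fixed). -/
def geo {n r : ℕ} (σ u : Conf n r) (t : ℝ) : Conf n r :=
  fun i => Real.cos (‖u i‖ * t) • σ i + (Real.sin (‖u i‖ * t) / ‖u i‖) • u i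

/-- Tangency: `u ∈ T_σ M_r` iff every row of `u` is orthogonal to the
    corresponding row of `σ`. -/
def tangent {n r : ℕ} (σ u : Conf n r) : Prop := ∀ i, ⟪u i, σ i⟫ = 0

/-- Squared Frobenius norm `‖u‖_F² = ∑_i ‖u_i‖²`. -/
def fnormSq {n r : ℕ} (u : Conf n r) : ℝ := ∑ i, ‖u i‖ ^ 2

/-- Riemannian gradient pairing `G_σ(u) = 2 ∑_i ⟨u_i, g_i(σ)⟩`. -/
def Gform {n r : ℕ} (A : Matrix (Fin n) (Fin n) ℝ) (σ u : Conf n r) : ℝ :=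
  2 * ∑ i, ⟪u i, gvec A σ i⟫

/-- Riemannian Hessian quadratic form
    `H_σ(u) = 2 ∑_i (⟨u_i, v_i⟩ − ‖u_i‖² ⟨σ_i, g_i(σ)⟩)` with `v_i = ∑_{j≠i} A_{ij} u_j`. -/
def Hform {n r : ℕ} (A : Matrix (Fin n) (Fin n) ℝ) (σ u : Conf n r) : ℝ :=
  2 * ∑ i, (⟪u i, gvec A u i⟫ - ‖u i‖ ^ 2 * ⟪σ i, gvec A σ i⟫)

/-- Stationary point: `g_i(σ) ≠ 0` and `σ_i = g_i(σ)/‖g_i(σ)‖` for all `i`. -/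
def stationary {n r : ℕ} (A : Matrix (Fin n) (Fin n) ℝ) (σ : Conf n r) : Prop :=
  ∀ i, gvec A σ i ≠ 0 ∧ σ i = ‖gvec A σ i‖⁻¹ • gvec A σ i

/-- `w ∈ V_σ = {σB : Bᵀ = −B}` (rows of `σB` given by `(σB)_{ik} = ∑_l σ_{il} B_{lk}`). -/
def inV {n r : ℕ} (σ w : Conf n r) : Prop :=
  ∃ B : Matrix (Fin r) (Fin r) ℝ, Bᵀ = -B ∧ ∀ i k, w i k = ∑ l, σ i l * B l k

/-- Frobenius-orthogonality of `u` to the subspace `V_σ`. -/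
def perpV {n r : ℕ} (σ u : Conf n r) : Prop :=
  ∀ w : Conf n r, inV σ w → ∑ i, ⟪u i, w i⟫ = 0

/-- `f` satisfies quadratic decay at `σ` with constant `μ`:
    `H_σ(u) ≤ −μ ‖u‖_F²` for all tangent `u` Frobenius-orthogonal to `V_σ`. -/
def quadDecay {n r : ℕ} (A : Matrix (Fin n) (Fin n) ℝ) (σ : Conf n r) (μ : ℝ) : Prop :=
  ∀ u : Conf n r, tangent σ u → perpV σ u → Hform A σ u ≤ -μ * fnormSq u

/-- Geodesic distance `dist(σ, σ') = (∑_i arccos⟨σ_i, σ'_i⟩²)^{1/2}`. -/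
def gdist {n r : ℕ} (σ σ' : Conf n r) : ℝ :=
  Real.sqrt (∑ i, Real.arccos ⟪σ i, σ' i⟫ ^ 2)

/-- Right-multiplication of a configuration by a matrix `Q ∈ ℝ^{r×r}` (rowwise). -/
def rowMulQ {n r : ℕ} (σ : Conf n r) (Q : Matrix (Fin r) (Fin r) ℝ) : Conf n r :=
  fun i => (EuclideanSpace.equiv (Fin r) ℝ).symm (fun k => ∑ l, σ i l * Q l k)

/-- Distance to the equivalence class `[σ'] = {σ'Q : Q ∈ O(r)}`. -/
def distClass {n r : ℕ} (σ σ' : Conf n r) : ℝ :=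
  ⨅ Q : {Q : Matrix (Fin r) (Fin r) ℝ // Qᵀ * Q = 1}, gdist σ (rowMulQ σ' Q.1)

/-- `f* = sup_{σ ∈ M_r} f(σ)`. -/
def fstar {n r : ℕ} (A : Matrix (Fin n) (Fin n) ℝ) : ℝ :=
  sSup (fval A '' {σ : Conf n r | inM σ})

/-- The optimal value of the SDP with unit-diagonal constraints. -/
def SDPval {n : ℕ} (A : Matrix (Fin n) (Fin n) ℝ) : ℝ :=
  sSup {y | ∃ X : Matrix (Fin n) (Fin n) ℝ, X.PosSemidef ∧ (∀ i, X i i = 1) ∧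
    y = ∑ i, ∑ j, A i j * X i j}

/-- BCM iterates along a sequence of coordinates `ω`. -/
def iterSeq {n r : ℕ} (A : Matrix (Fin n) (Fin n) ℝ) (σ0 : Conf n r) (ω : ℕ → Fin n) :
    ℕ → Conf n r
  | 0 => σ0
  | k + 1 => Tupd A (iterSeq A σ0 ω k) (ω k)

/-- The set of rows where `u` is nonzero. -/
def suppu {n r : ℕ} (u : Conf n r) : Finset (Fin n) :=
  letI := Classical.decPred (fun i : Fin n => u i ≠ 0)
  Finset.univ.filter (fun i : Fin n => u i ≠ 0)


lemma inner_gvec' {n r : ℕ} (A : Matrix (Fin n) (Fin n) ℝ) (σ : Conf n r) (i : Fin n)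
    (x : Pt r) : ⟪x, gvec A σ i⟫ = ∑ j ∈ univ.erase i, A i j * ⟪x, σ j⟫ := by
  rw [gvec, inner_sum]
  exact Finset.sum_congr rfl fun j _ => real_inner_smul_right _ _ _

lemma fval_update' {n r : ℕ} (A : Matrix (Fin n) (Fin n) ℝ) (hA : A.IsSymm)
    (hdiag : ∀ i, A i i = 0) (σ : Conf n r) (i : Fin n) (x : Pt r) :
    fval A (Function.update σ i x) = fval A σ + 2 * ⟪x - σ i, gvec A σ i⟫ := by
  classical
  set σ' := Function.update σ i x with hσ'
  have hup : ∀ j, j ≠ i → σ' j = σ j := fun j hj => Function.update_of_ne hj _ _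
  have hupi : σ' i = x := Function.update_self _ _ _
  have split : ∀ (τ : Conf n r),
      fval A τ = (∑ j ∈ univ.erase i, (∑ k ∈ univ.erase i, A j k * ⟪τ j, τ k⟫
        + A j i * ⟪τ j, τ i⟫)) + (∑ k ∈ univ.erase i, A i k * ⟪τ i, τ k⟫
        + A i i * ⟪τ i, τ i⟫) := by
    intro τ
    rw [fval, ← Finset.sum_erase_add _ _ (mem_univ i)]
    congr 1
    · exact Finset.sum_congr rfl fun j _ => (Finset.sum_erase_add _ _ (mem_univ i)).symm
    · exact (Finset.sum_erase_add _ _ (mem_univ i)).symm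
  have e1 : ∀ j ∈ univ.erase i,
      (∑ k ∈ univ.erase i, A j k * ⟪σ' j, σ' k⟫ + A j i * ⟪σ' j, σ' i⟫)
      = (∑ k ∈ univ.erase i, A j k * ⟪σ j, σ k⟫ + A i j * ⟪x, σ j⟫) := by
    intro j hj
    have hji : j ≠ i := (Finset.mem_erase.mp hj).1
    rw [hup j hji, hupi]
    congr 1
    · exact Finset.sum_congr rfl fun k hk => by rw [hup k (Finset.mem_erase.mp hk).1]
    · rw [← hA.apply, real_inner_comm]
  have e2 : ∀ j ∈ univ.erase i,
      (∑ k ∈ univ.erase i, A j k * ⟪σ j, σ k⟫ + A j i * ⟪σ j, σ i⟫)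
      = (∑ k ∈ univ.erase i, A j k * ⟪σ j, σ k⟫ + A i j * ⟪σ i, σ j⟫) := by
    intro j hj
    rw [← hA.apply, real_inner_comm]
  have e3 : ∑ k ∈ univ.erase i, A i k * ⟪σ' i, σ' k⟫
      = ∑ k ∈ univ.erase i, A i k * ⟪x, σ k⟫ := by
    refine Finset.sum_congr rfl fun k hk => ?_
    rw [hupi, hup k (Finset.mem_erase.mp hk).1]
  rw [split σ', split σ, Finset.sum_congr rfl e1, Finset.sum_congr rfl e2, e3, hupi,
    hdiag i, Finset.sum_add_distrib, Finset.sum_add_distrib,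
    inner_sub_left, inner_gvec', inner_gvec']
  ring

lemma fval_Tupd' {n r : ℕ} (A : Matrix (Fin n) (Fin n) ℝ) (hA : A.IsSymm)
    (hdiag : ∀ i, A i i = 0) (σ : Conf n r) (i : Fin n) :
    fval A (Tupd A σ i) = fval A σ + 2 * (‖gvec A σ i‖ - ⟪σ i, gvec A σ i⟫) := by
  classical
  by_cases hg : gvec A σ i = 0
  · simp [Tupd, hg, Function.update_eq_self]
  · have hne : ‖gvec A σ i‖ ≠ 0 := norm_ne_zero_iff.mpr hg
    have : Tupd A σ i = Function.update σ i (‖gvec A σ i‖⁻¹ • gvec A σ i) := by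
      simp [Tupd, hg]
    rw [this, fval_update' A hA hdiag, inner_sub_left, real_inner_smul_left,
      real_inner_self_eq_norm_sq]
    field_simp

/-- expected ascent of BCM under importance sampling, one step. -/
theorem importance_bcm_expected_ascent {n r : ℕ} (hn : 0 < n) (hr : 0 < r)
    (A : Matrix (Fin n) (Fin n) ℝ) (hA : A.IsSymm) (hdiag : ∀ i, A i i = 0) (hA0 : A ≠ 0)
    (σ : Conf n r) (hσ : inM σ) (hpos : 0 < ∑ j, ‖gvec A σ j‖) :
    gradNormSq A σ / (2 * Anorm11 A) ≤
      (∑ i, (‖gvec A σ i‖ / ∑ j, ‖gvec A σ j‖) * fval A (Tupd A σ i)) - fval A σ := by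
  classical
  have hcs : ∀ i, ⟪σ i, gvec A σ i⟫ ≤ ‖gvec A σ i‖ := fun i => by
    calc ⟪σ i, gvec A σ i⟫ ≤ ‖σ i‖ * ‖gvec A σ i‖ := real_inner_le_norm _ _
      _ = ‖gvec A σ i‖ := by rw [hσ i, one_mul]
  have hcs' : ∀ i, -‖gvec A σ i‖ ≤ ⟪σ i, gvec A σ i⟫ := fun i => by
    have h := abs_real_inner_le_norm (σ i) (gvec A σ i)
    rw [hσ i, one_mul] at h
    have := neg_abs_le (⟪σ i, gvec A σ i⟫ : ℝ)
    linarith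
  have hSN : (∑ j, ‖gvec A σ j‖) ≤ Anorm11 A := by
    rw [Anorm11]
    refine Finset.sum_le_sum fun i _ => ?_
    calc ‖gvec A σ i‖ ≤ ∑ j ∈ univ.erase i, ‖A i j • σ j‖ := norm_sum_le _ _
      _ = ∑ j ∈ univ.erase i, |A i j| := by
          refine Finset.sum_congr rfl fun j _ => ?_
          rw [norm_smul, hσ j, mul_one, Real.norm_eq_abs]
      _ ≤ ∑ j, |A i j| := Finset.sum_le_sum_of_subset_of_nonneg
          (Finset.erase_subset _ _) (fun j _ _ => abs_nonneg _)
  have hT0 : 0 ≤ ∑ i, ‖gvec A σ i‖ * (‖gvec A σ i‖ - ⟪σ i, gvec A σ i⟫) :=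
    Finset.sum_nonneg fun i _ => mul_nonneg (norm_nonneg _) (by linarith [hcs i])
  have hexp : (∑ i, (‖gvec A σ i‖ / ∑ j, ‖gvec A σ j‖) * fval A (Tupd A σ i)) - fval A σ
      = (2 / ∑ j, ‖gvec A σ j‖) *
        ∑ i, ‖gvec A σ i‖ * (‖gvec A σ i‖ - ⟪σ i, gvec A σ i⟫) := by
    have h1 : ∀ i : Fin n, (‖gvec A σ i‖ / ∑ j, ‖gvec A σ j‖) * fval A (Tupd A σ i)
        = (fval A σ / ∑ j, ‖gvec A σ j‖) * ‖gvec A σ i‖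
          + (2 / ∑ j, ‖gvec A σ j‖) *
            (‖gvec A σ i‖ * (‖gvec A σ i‖ - ⟪σ i, gvec A σ i⟫)) := by
      intro i; rw [fval_Tupd' A hA hdiag]; ring
    rw [Finset.sum_congr rfl fun i _ => h1 i, Finset.sum_add_distrib, ← Finset.mul_sum,
      ← Finset.mul_sum, div_mul_cancel₀ _ (ne_of_gt hpos)]
    ring
  rw [hexp, gradNormSq]
  have hnum : (2:ℝ) * ∑ i, (‖gvec A σ i‖ ^ 2 - ⟪σ i, gvec A σ i⟫ ^ 2)
      ≤ 4 * ∑ i, ‖gvec A σ i‖ * (‖gvec A σ i‖ - ⟪σ i, gvec A σ i⟫) := by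
    rw [Finset.mul_sum, Finset.mul_sum]
    refine Finset.sum_le_sum fun i _ => ?_
    nlinarith [hcs i, hcs' i, norm_nonneg (gvec A σ i)]
  calc (2 * ∑ i, (‖gvec A σ i‖ ^ 2 - ⟪σ i, gvec A σ i⟫ ^ 2)) / (2 * Anorm11 A)
      ≤ (4 * ∑ i, ‖gvec A σ i‖ * (‖gvec A σ i‖ - ⟪σ i, gvec A σ i⟫))
          / (2 * ∑ j, ‖gvec A σ j‖) :=
        div_le_div₀ (by linarith) hnum (by linarith) (by linarith)
    _ = (2 / ∑ j, ‖gvec A σ j‖) * ∑ i, ‖gvec A σ i‖ * (‖gvec A σ i‖ - ⟪σ i, gvec A σ i⟫) := by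
        rw [div_mul_eq_mul_div, div_eq_div_iff (by linarith) (ne_of_gt hpos)]
        ring
end
end

section
/- (Gradient-norm lower bound along geodesics through a stationary point.) Let σ̄ ∈ M_r be a stationary point, i.e. g_i(σ̄) ≠ 0 and σ̄_i = g_i(σ̄)/‖g_i(σ̄)‖ for every i. Let u ∈ T_σ̄ M_r with ‖u‖_F = 1 and let 0 ≤ t ≤ 1. Then ‖grad f(σ̄(t))‖_F² ≥ 2 t² Σ_{i : u_i ≠ 0} (‖u_i‖ ‖g_i(σ̄)‖ − ⟨u_i, v_i⟩/‖u_i‖)² − 88 n ‖A‖₁² t³, where v_i = Σ_{j≠i} A_{ij} u_j. -/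
open scoped BigOperators RealInnerProductSpace
open Finset Matrix

noncomputable section

lemma bessel {r : ℕ} (σ w g : Pt r) (hσ : ‖σ‖ = 1) (hw : ‖w‖ = 1) (ho : ⟪σ, w⟫ = 0) :
    ⟪w, g⟫ ^ 2 ≤ ‖g‖ ^ 2 - ⟪σ, g⟫ ^ 2 := by
  have h0 : (0:ℝ) ≤ ‖g - ⟪σ,g⟫ • σ - ⟪w,g⟫ • w‖ ^ 2 := sq_nonneg _
  rw [← real_inner_self_eq_norm_sq] at h0
  simp only [inner_sub_left, inner_sub_right, real_inner_smul_left, real_inner_smul_right] at h0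
  have hσ2 : ⟪σ,σ⟫ = 1 := by rw [real_inner_self_eq_norm_sq, hσ]; norm_num
  have hw2 : ⟪w,w⟫ = 1 := by rw [real_inner_self_eq_norm_sq, hw]; norm_num
  have hg2 : ⟪g,g⟫ = ‖g‖^2 := real_inner_self_eq_norm_sq g
  have hc1 : ⟪g,σ⟫ = ⟪σ,g⟫ := real_inner_comm _ _
  have hc2 : ⟪g,w⟫ = ⟪w,g⟫ := real_inner_comm _ _
  have hc3 : ⟪w,σ⟫ = ⟪σ,w⟫ := real_inner_comm _ _
  rw [hσ2, hw2, hg2, hc1, hc2, hc3, ho] at h0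
  nlinarith [h0]


lemma trig1 {x : ℝ} (h0 : 0 ≤ x) (h1 : x ≤ 1) : |Real.sin x - x| ≤ x ^ 3 / 4 := by
  rcases eq_or_lt_of_le h0 with h | h
  · simp [← h]
  · have h2 := Real.sin_gt_sub_cube h
    have h3 := Real.sin_lt h
    rw [abs_le]
    constructor <;> nlinarith

lemma trig2 (x : ℝ) : |Real.cos x - 1| ≤ x ^ 2 / 2 := by
  have h1 := Real.one_sub_sq_div_two_le_cos (x := x)
  have h2 := Real.cos_le_one x
  rw [abs_le]; constructor <;> linarith

set_option maxHeartbeats 2000000 in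
lemma scalar_bound (a b t x y z v : ℝ)
    (ha : 0 < a) (ha1 : a ≤ 1) (hb : 0 ≤ b) (hb1 : b ≤ 1) (ht : 0 ≤ t) (ht1 : t ≤ 1)
    (hx : |x| ≤ 1) (hy : |y| ≤ b) (hz : |z| ≤ a) (hv : |v| ≤ a * b) :
    |(-Real.sin (a*t)) * Real.cos (b*t) * x + (-Real.sin (a*t)) * (Real.sin (b*t)/b) * y
      + (Real.cos (a*t)/a) * Real.cos (b*t) * z + (Real.cos (a*t)/a) * (Real.sin (b*t)/b) * v
      - (z/a + t*(-(a*x) + v/a))| ≤ 5 * t^2 := by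
  set Sa := Real.sin (a*t) with hSa
  set Ca := Real.cos (a*t) with hCa
  set Sb := Real.sin (b*t) with hSb
  set Cb := Real.cos (b*t) with hCb
  have hat0 : 0 ≤ a*t := by positivity
  have hat1 : a*t ≤ 1 := by nlinarith
  have hatt : a*t ≤ t := by nlinarith
  have hbt0 : 0 ≤ b*t := by positivity
  have hbtt : b*t ≤ t := by nlinarith
  have hbt1 : b*t ≤ 1 := by linarith
  have ht3 : (0:ℝ) ≤ t^3 := by positivity
  have ht31 : t^3 ≤ t^2 := by nlinarith [sq_nonneg t]
  have h1 : |a*t - Sa| ≤ t^3/4 := by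
    rw [abs_sub_comm]
    calc |Sa - a*t| ≤ (a*t)^3/4 := trig1 hat0 hat1
      _ ≤ t^3/4 := by nlinarith [pow_le_pow_left₀ hat0 hatt 3]
  have h6 : |Sb - b*t| ≤ b*t^3/4 := by
    have hb3 : b^3 ≤ b := by nlinarith [mul_nonneg (mul_nonneg hb (sub_nonneg.2 hb1)) (by linarith : (0:ℝ) ≤ 1 + b)]
    calc |Sb - b*t| ≤ (b*t)^3/4 := trig1 hbt0 hbt1
      _ ≤ b*t^3/4 := by nlinarith [mul_nonneg (sub_nonneg.2 hb3) ht3]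
  have h2 : |Cb - 1| ≤ t^2/2 := by
    calc |Cb - 1| ≤ (b*t)^2/2 := trig2 _
      _ ≤ t^2/2 := by nlinarith [sq_le_sq' (by linarith : -t ≤ b*t) hbtt]
  have h3 : |Ca - 1| ≤ t^2/2 := by
    calc |Ca - 1| ≤ (a*t)^2/2 := trig2 _
      _ ≤ t^2/2 := by nlinarith [sq_le_sq' (by linarith : -t ≤ a*t) hatt]
  have h4 : |Sa| ≤ t := by
    calc |Sa| ≤ |a*t| := Real.abs_sin_le_abs
      _ = a*t := abs_of_nonneg hat0
      _ ≤ t := hatt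
  have h5 : |Sb/b| ≤ t := by
    rcases eq_or_lt_of_le hb with hb0 | hb0
    · simp [hSb, ← hb0, ht]
    · rw [abs_div, abs_of_pos hb0, div_le_iff₀ hb0]
      calc |Sb| ≤ |b*t| := Real.abs_sin_le_abs
        _ = b*t := abs_of_nonneg hbt0
        _ = t*b := by ring
  have key : (-Sa) * Cb * x + (-Sa) * (Sb/b) * y + (Ca/a) * Cb * z + (Ca/a) * (Sb/b) * v
      - (z/a + t*(-(a*x) + v/a))
      = (a*t - Sa*Cb)*x + (-(Sa*(Sb/b)))*y + (Ca*Cb - 1)*(z/a) + (Ca*(Sb/b) - t)*(v/a) := by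
    ring
  rw [key]
  have hza : |z/a| ≤ 1 := by
    rw [abs_div, abs_of_pos ha, div_le_one ha]; exact hz
  have hva : |v/a| ≤ b := by
    rw [abs_div, abs_of_pos ha, div_le_iff₀ ha]
    calc |v| ≤ a*b := hv
      _ = b*a := by ring
  have hD1 : |(a*t - Sa*Cb)*x| ≤ t^2 := by
    rw [abs_mul]
    have e : a*t - Sa*Cb = (a*t - Sa) + Sa*(1 - Cb) := by ring
    have hc : |a*t - Sa*Cb| ≤ t^3/4 + t*(t^2/2) := by
      rw [e]
      refine (abs_add_le _ _).trans ?_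
      have h2' : |1 - Cb| ≤ t^2/2 := by rwa [abs_sub_comm] at h2
      have : |Sa*(1-Cb)| ≤ t*(t^2/2) := by
        rw [abs_mul]; exact mul_le_mul h4 h2' (abs_nonneg _) ht
      linarith
    calc |a*t - Sa*Cb| * |x| ≤ (t^3/4 + t*(t^2/2))*1 :=
          mul_le_mul hc hx (abs_nonneg _) (by positivity)
      _ = t^3*(3/4) := by ring
      _ ≤ t^2 := by linarith
  have hD2 : |(-(Sa*(Sb/b)))*y| ≤ t^2 := by
    rw [abs_mul, abs_neg, abs_mul]
    calc |Sa| * |Sb/b| * |y| ≤ t*t*b := by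
          exact mul_le_mul (mul_le_mul h4 h5 (abs_nonneg _) ht) hy (abs_nonneg _)
            (by positivity)
      _ = t^2*b := by ring
      _ ≤ t^2 := by simpa using mul_le_mul_of_nonneg_left hb1 (sq_nonneg t)
  have hD3 : |(Ca*Cb - 1)*(z/a)| ≤ t^2 := by
    rw [abs_mul]
    have e : Ca*Cb - 1 = (Ca - 1)*Cb + (Cb - 1) := by ring
    have hCb1 : |Cb| ≤ 1 := Real.abs_cos_le_one _
    have hc : |Ca*Cb - 1| ≤ t^2/2*1 + t^2/2 := by
      rw [e]
      refine (abs_add_le _ _).trans ?_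
      have : |(Ca-1)*Cb| ≤ t^2/2*1 := by
        rw [abs_mul]; exact mul_le_mul h3 hCb1 (abs_nonneg _) (by positivity)
      linarith
    calc |Ca*Cb - 1| * |z/a| ≤ (t^2/2*1 + t^2/2)*1 :=
          mul_le_mul hc hza (abs_nonneg _) (by positivity)
      _ = t^2 := by ring
  have hD4 : |(Ca*(Sb/b) - t)*(v/a)| ≤ t^2 := by
    rcases eq_or_lt_of_le hb with hb0 | hb0
    · have hv0 : v = 0 := by
        have : |v| ≤ 0 := by rw [← hb0] at hv; simpa using hv
        exact abs_eq_zero.1 (le_antisymm this (abs_nonneg v))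
      simp [hv0]
      positivity
    · rw [abs_mul]
      have e : Ca*(Sb/b) - t = (Sb/b - t) + (Ca - 1)*(Sb/b) := by ring
      have hsbt : |Sb/b - t| ≤ t^3/4 := by
        rw [div_sub' (ne_of_gt hb0), abs_div, abs_of_pos hb0, div_le_iff₀ hb0]
        calc |Sb - b*t| ≤ b*t^3/4 := h6
          _ ≤ t^3/4*b := by ring_nf; exact le_refl _
      have hc : |Ca*(Sb/b) - t| ≤ t^3/4 + t^2/2*t := by
        rw [e]
        refine (abs_add_le _ _).trans ?_
        have : |(Ca-1)*(Sb/b)| ≤ t^2/2*t := by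
          rw [abs_mul]; exact mul_le_mul h3 h5 (abs_nonneg _) (by positivity)
        linarith
      calc |Ca*(Sb/b) - t| * |v/a| ≤ (t^3/4 + t^2/2*t)*1 := by
            refine mul_le_mul hc (hva.trans hb1) (abs_nonneg _) (by positivity)
        _ = t^3*(3/4) := by ring
        _ ≤ t^2 := by linarith
  calc |(a*t - Sa*Cb)*x + (-(Sa*(Sb/b)))*y + (Ca*Cb - 1)*(z/a) + (Ca*(Sb/b) - t)*(v/a)|
      ≤ |(a*t - Sa*Cb)*x + (-(Sa*(Sb/b)))*y + (Ca*Cb - 1)*(z/a)| + |(Ca*(Sb/b) - t)*(v/a)| :=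
        abs_add_le _ _
    _ ≤ |(a*t - Sa*Cb)*x + (-(Sa*(Sb/b)))*y| + |(Ca*Cb - 1)*(z/a)| + |(Ca*(Sb/b) - t)*(v/a)| := by
        have := abs_add_le ((a*t - Sa*Cb)*x + (-(Sa*(Sb/b)))*y) ((Ca*Cb - 1)*(z/a))
        linarith
    _ ≤ |(a*t - Sa*Cb)*x| + |(-(Sa*(Sb/b)))*y| + |(Ca*Cb - 1)*(z/a)| + |(Ca*(Sb/b) - t)*(v/a)| := by
        have := abs_add_le ((a*t - Sa*Cb)*x) ((-(Sa*(Sb/b)))*y)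
        linarith
    _ ≤ t^2 + t^2 + t^2 + t^2 := by linarith
    _ ≤ 5*t^2 := by have := sq_nonneg t; linarith


lemma combo_inner {r : ℕ} (σ x : Pt r) (hσ : ‖σ‖ = 1) (horth : ⟪x, σ⟫ = 0)
    (hx : x ≠ 0) (c s c' s' : ℝ) :
    ⟪c • σ + (s/‖x‖) • x, c' • σ + (s'/‖x‖) • x⟫ = c*c' + s*s' := by
  have ha : ‖x‖ ≠ 0 := norm_ne_zero_iff.2 hx
  have hσσ : ⟪σ, σ⟫ = 1 := by rw [real_inner_self_eq_norm_sq, hσ]; norm_num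
  have hxx : ⟪x, x⟫ = ‖x‖^2 := real_inner_self_eq_norm_sq x
  have hσx : ⟪σ, x⟫ = 0 := by rw [real_inner_comm]; exact horth
  simp only [inner_add_left, inner_add_right, real_inner_smul_left, real_inner_smul_right,
    hσσ, hxx, hσx, horth]
  field_simp
  ring

lemma combo_norm {r : ℕ} (σ x : Pt r) (hσ : ‖σ‖ = 1) (horth : ⟪x, σ⟫ = 0)
    (hx : x ≠ 0) (c s : ℝ) (hcs : c^2 + s^2 = 1) :
    ‖c • σ + (s/‖x‖) • x‖ = 1 := by
  have h := combo_inner σ x hσ horth hx c s c s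
  rw [real_inner_self_eq_norm_sq] at h
  rw [← Real.sqrt_sq (norm_nonneg (c • σ + (s/‖x‖) • x)), h]
  rw [show c*c + s*s = 1 by nlinarith]
  exact Real.sqrt_one

set_option maxHeartbeats 2000000 in
lemma row_estimate {n r : ℕ} (A : Matrix (Fin n) (Fin n) ℝ) (σb u : Conf n r) (t K : ℝ)
    (hσb : inM σb) (hu : tangent σb u) (hu1 : ∀ j, ‖u j‖ ≤ 1)
    (ht0 : 0 ≤ t) (ht1 : t ≤ 1) (hK0 : 0 ≤ K)
    (i : Fin n) (hui : u i ≠ 0)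
    (hrow : ∑ j ∈ univ.erase i, |A i j| ≤ K)
    (hug : ⟪u i, gvec A σb i⟫ = 0)
    (hσg : ⟪σb i, gvec A σb i⟫ = ‖gvec A σb i‖)
    (hgK : ‖gvec A σb i‖ ≤ K) (hvK : ‖gvec A u i‖ ≤ K)
    (hσt1 : ∀ j, ‖geo σb u t j‖ = 1) :
    (‖u i‖ * ‖gvec A σb i‖ - ⟪u i, gvec A u i⟫ / ‖u i‖) ^ 2 * t ^ 2 - 20 * K ^ 2 * t ^ 3
      ≤ ‖gvec A (geo σb u t) i‖ ^ 2 - ⟪geo σb u t i, gvec A (geo σb u t) i⟫ ^ 2 := by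
  have hai : 0 < ‖u i‖ := norm_pos_iff.2 hui
  set σt := geo σb u t with hσtdef
  set w : Pt r := (-Real.sin (‖u i‖*t)) • σb i + (Real.cos (‖u i‖*t)/‖u i‖) • u i with hwdef
  set cc : ℝ := ‖u i‖ * ‖gvec A σb i‖ - ⟪u i, gvec A u i⟫ / ‖u i‖ with hccdef
  have hwn : ‖w‖ = 1 := by
    rw [hwdef]
    exact combo_norm (σb i) (u i) (hσb i) (hu i) hui _ _
      (by nlinarith [Real.sin_sq_add_cos_sq (‖u i‖*t)])
  have hwo : ⟪σt i, w⟫ = 0 := by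
    rw [hσtdef, hwdef]
    show ⟪Real.cos (‖u i‖*t) • σb i + (Real.sin (‖u i‖*t)/‖u i‖) • u i, _⟫ = 0
    rw [combo_inner (σb i) (u i) (hσb i) (hu i) hui]
    ring
  have hB := bessel (σt i) w (gvec A σt i) (hσt1 i) hwn hwo
  have hinner : ⟪w, gvec A σt i⟫ = ∑ j ∈ univ.erase i, A i j * ⟪w, σt j⟫ := by
    rw [gvec, inner_sum]
    exact Finset.sum_congr rfl fun j _ => real_inner_smul_right _ _ _
  have hpair : ∀ j, |⟪w, σt j⟫ -
      (⟪u i, σb j⟫/‖u i‖ + t*(-(‖u i‖*⟪σb i, σb j⟫) + ⟪u i, u j⟫/‖u i‖))| ≤ 5*t^2 := by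
    intro j
    have hexp : ⟪w, σt j⟫ =
        (-Real.sin (‖u i‖*t)) * Real.cos (‖u j‖*t) * ⟪σb i, σb j⟫
        + (-Real.sin (‖u i‖*t)) * (Real.sin (‖u j‖*t)/‖u j‖) * ⟪σb i, u j⟫
        + (Real.cos (‖u i‖*t)/‖u i‖) * Real.cos (‖u j‖*t) * ⟪u i, σb j⟫
        + (Real.cos (‖u i‖*t)/‖u i‖) * (Real.sin (‖u j‖*t)/‖u j‖) * ⟪u i, u j⟫ := by
      rw [hwdef, hσtdef]
      show ⟪_ • σb i + _ • u i,
        Real.cos (‖u j‖*t) • σb j + (Real.sin (‖u j‖*t)/‖u j‖) • u j⟫ = _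
      simp only [inner_add_left, inner_add_right, real_inner_smul_left, real_inner_smul_right]
      ring
    rw [hexp]
    have b1 : |⟪σb i, σb j⟫| ≤ 1 := by
      have := abs_real_inner_le_norm (σb i) (σb j); rwa [hσb i, hσb j, one_mul] at this
    have b2 : |⟪σb i, u j⟫| ≤ ‖u j‖ := by
      have := abs_real_inner_le_norm (σb i) (u j); rwa [hσb i, one_mul] at this
    have b3 : |⟪u i, σb j⟫| ≤ ‖u i‖ := by
      have := abs_real_inner_le_norm (u i) (σb j); rwa [hσb j, mul_one] at this
    have b4 : |⟪u i, u j⟫| ≤ ‖u i‖ * ‖u j‖ := abs_real_inner_le_norm _ _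
    exact scalar_bound (‖u i‖) (‖u j‖) t _ _ _ _ hai (hu1 i) (norm_nonneg _) (hu1 j)
      ht0 ht1 b1 b2 b3 b4
  have hS1 : ∑ j ∈ univ.erase i, A i j * ⟪u i, σb j⟫ = 0 := by
    have h : ⟪u i, gvec A σb i⟫ = ∑ j ∈ univ.erase i, A i j * ⟪u i, σb j⟫ := by
      rw [gvec, inner_sum]
      exact Finset.sum_congr rfl fun j _ => real_inner_smul_right _ _ _
    rw [← h, hug]
  have hS2 : ∑ j ∈ univ.erase i, A i j * ⟪σb i, σb j⟫ = ‖gvec A σb i‖ := by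
    have h : ⟪σb i, gvec A σb i⟫ = ∑ j ∈ univ.erase i, A i j * ⟪σb i, σb j⟫ := by
      rw [gvec, inner_sum]
      exact Finset.sum_congr rfl fun j _ => real_inner_smul_right _ _ _
    rw [← h, hσg]
  have hS3 : ∑ j ∈ univ.erase i, A i j * ⟪u i, u j⟫ = ⟪u i, gvec A u i⟫ := by
    have h : ⟪u i, gvec A u i⟫ = ∑ j ∈ univ.erase i, A i j * ⟪u i, u j⟫ := by
      rw [gvec, inner_sum]
      exact Finset.sum_congr rfl fun j _ => real_inner_smul_right _ _ _
    rw [h]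
  have hsumP : ∑ j ∈ univ.erase i,
      A i j * (⟪u i, σb j⟫/‖u i‖ + t*(-(‖u i‖*⟪σb i, σb j⟫) + ⟪u i, u j⟫/‖u i‖))
      = -cc * t := by
    have expand : ∀ j ∈ univ.erase i,
        A i j * (⟪u i, σb j⟫/‖u i‖ + t*(-(‖u i‖*⟪σb i, σb j⟫) + ⟪u i, u j⟫/‖u i‖))
        = (1/‖u i‖) * (A i j * ⟪u i, σb j⟫) + ((-(t*‖u i‖)) * (A i j * ⟪σb i, σb j⟫)
            + (t/‖u i‖) * (A i j * ⟪u i, u j⟫)) := fun j _ => by ring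
    rw [Finset.sum_congr rfl expand, Finset.sum_add_distrib, Finset.sum_add_distrib,
      ← Finset.mul_sum, ← Finset.mul_sum, ← Finset.mul_sum, hS1, hS2, hS3, hccdef]
    field_simp
    ring
  have hfinal : |⟪w, gvec A σt i⟫ + cc * t| ≤ 5*K*t^2 := by
    have key : ⟪w, gvec A σt i⟫ + cc * t
        = ∑ j ∈ univ.erase i, A i j * (⟪w, σt j⟫ -
            (⟪u i, σb j⟫/‖u i‖ + t*(-(‖u i‖*⟪σb i, σb j⟫) + ⟪u i, u j⟫/‖u i‖))) := by
      have hsub : ∀ j ∈ univ.erase i, A i j * (⟪w, σt j⟫ -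
            (⟪u i, σb j⟫/‖u i‖ + t*(-(‖u i‖*⟪σb i, σb j⟫) + ⟪u i, u j⟫/‖u i‖)))
          = A i j * ⟪w, σt j⟫ - A i j *
            (⟪u i, σb j⟫/‖u i‖ + t*(-(‖u i‖*⟪σb i, σb j⟫) + ⟪u i, u j⟫/‖u i‖)) :=
        fun j _ => mul_sub _ _ _
      rw [Finset.sum_congr rfl hsub, Finset.sum_sub_distrib, hsumP, ← hinner]
      ring
    rw [key]
    calc |∑ j ∈ univ.erase i, A i j * (⟪w, σt j⟫ -
            (⟪u i, σb j⟫/‖u i‖ + t*(-(‖u i‖*⟪σb i, σb j⟫) + ⟪u i, u j⟫/‖u i‖)))|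
        ≤ ∑ j ∈ univ.erase i, |A i j * (⟪w, σt j⟫ -
            (⟪u i, σb j⟫/‖u i‖ + t*(-(‖u i‖*⟪σb i, σb j⟫) + ⟪u i, u j⟫/‖u i‖)))| :=
          Finset.abs_sum_le_sum_abs _ _
      _ ≤ ∑ j ∈ univ.erase i, |A i j| * (5*t^2) := by
          refine Finset.sum_le_sum fun j _ => ?_
          rw [abs_mul]
          exact mul_le_mul_of_nonneg_left (hpair j) (abs_nonneg _)
      _ = (∑ j ∈ univ.erase i, |A i j|) * (5*t^2) := by rw [Finset.sum_mul]
      _ ≤ K * (5*t^2) := mul_le_mul_of_nonneg_right hrow (by positivity)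
      _ = 5*K*t^2 := by ring
  have hcB : |cc| ≤ 2*K := by
    rw [hccdef]
    have h1 : |⟪u i, gvec A u i⟫ / ‖u i‖| ≤ K := by
      rw [abs_div, abs_of_pos hai, div_le_iff₀ hai]
      calc |⟪u i, gvec A u i⟫| ≤ ‖u i‖ * ‖gvec A u i‖ := abs_real_inner_le_norm _ _
        _ ≤ ‖u i‖ * K := mul_le_mul_of_nonneg_left hvK (norm_nonneg _)
        _ = K * ‖u i‖ := by ring
    have h2 : |‖u i‖ * ‖gvec A σb i‖| ≤ K := by
      rw [abs_of_nonneg (by positivity)]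
      calc ‖u i‖ * ‖gvec A σb i‖ ≤ 1 * K :=
            mul_le_mul (hu1 i) hgK (norm_nonneg _) zero_le_one
        _ = K := one_mul K
    calc |‖u i‖ * ‖gvec A σb i‖ - ⟪u i, gvec A u i⟫ / ‖u i‖|
        ≤ |‖u i‖ * ‖gvec A σb i‖| + |⟪u i, gvec A u i⟫ / ‖u i‖| := abs_sub _ _
      _ ≤ 2*K := by linarith
  -- conclude
  have hsq : cc^2*t^2 - 20*K^2*t^3 ≤ ⟪w, gvec A σt i⟫^2 := by
    set R := ⟪w, gvec A σt i⟫ + cc * t with hRdef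
    have e : ⟪w, gvec A σt i⟫^2 = R^2 - 2*(R*(cc*t)) + cc^2*t^2 := by rw [hRdef]; ring
    have hRct : R*(cc*t) ≤ 10*K^2*t^3 := by
      calc R*(cc*t) ≤ |R*(cc*t)| := le_abs_self _
        _ = |R| * (|cc| * |t|) := by rw [abs_mul, abs_mul]
        _ ≤ (5*K*t^2) * ((2*K) * t) := by
            refine mul_le_mul hfinal ?_ (by positivity) (by positivity)
            rw [abs_of_nonneg ht0]
            exact mul_le_mul_of_nonneg_right hcB ht0
        _ = 10*K^2*t^3 := by ring
    have hR2 : 0 ≤ R^2 := sq_nonneg R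
    linarith [e, hRct, hR2]
  calc cc^2*t^2 - 20*K^2*t^3 ≤ ⟪w, gvec A σt i⟫^2 := hsq
    _ ≤ ‖gvec A σt i‖^2 - ⟪σt i, gvec A σt i⟫^2 := hB


/-- gradient-norm lower bound along geodesics through a stationary point. -/
theorem stationary_gradient_lower_bound {n r : ℕ} (hn : 0 < n) (hr : 0 < r)
    (A : Matrix (Fin n) (Fin n) ℝ) (hA : A.IsSymm) (hdiag : ∀ i, A i i = 0)
    (σb : Conf n r) (hσb : inM σb) (hstat : stationary A σb)
    (u : Conf n r) (hu : tangent σb u) (hun : fnormSq u = 1)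
    (t : ℝ) (ht0 : 0 ≤ t) (ht1 : t ≤ 1) :
    2 * t ^ 2 * (∑ i ∈ suppu u,
        (‖u i‖ * ‖gvec A σb i‖ - ⟪u i, gvec A u i⟫ / ‖u i‖) ^ 2)
      - 88 * n * Anorm1 A ^ 2 * t ^ 3 ≤ gradNormSq A (geo σb u t) := by
  classical
  set K := Anorm1 A with hKdef
  set σt := geo σb u t with hσtdef
  have hsymm : ∀ i j, A j i = A i j := fun i j => by
    have := congrFun (congrFun hA i) j
    simpa [Matrix.transpose_apply] using this
  have hrow : ∀ i : Fin n, ∑ j ∈ univ.erase i, |A i j| ≤ K := by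
    intro i
    have h1 : ∑ j ∈ univ.erase i, |A i j| ≤ ∑ j, |A i j| :=
      Finset.sum_le_sum_of_subset_of_nonneg (Finset.subset_univ _)
        (fun j _ _ => abs_nonneg _)
    have h2 : (∑ j, |A i j|) = ∑ j, |A j i| :=
      Finset.sum_congr rfl fun j _ => by rw [hsymm i j]
    have h3 : (∑ j, |A j i|) ≤ K := by
      rw [hKdef, Anorm1]
      exact le_ciSup (f := fun j => ∑ i', |A i' j|)
        (Set.Finite.bddAbove (Set.finite_range _)) i
    linarith
  have hK0 : 0 ≤ K :=
    le_trans (Finset.sum_nonneg fun j _ => abs_nonneg _) (hrow ⟨0, hn⟩)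
  have hu1 : ∀ j, ‖u j‖ ≤ 1 := by
    intro j
    have h1 : ‖u j‖^2 ≤ fnormSq u :=
      Finset.single_le_sum (f := fun j => ‖u j‖^2) (fun i _ => sq_nonneg _)
        (Finset.mem_univ j)
    rw [hun] at h1
    nlinarith [norm_nonneg (u j)]
  have hgsmul : ∀ i, gvec A σb i = ‖gvec A σb i‖ • σb i := by
    intro i
    conv_rhs => rw [(hstat i).2]
    rw [smul_smul, mul_inv_cancel₀ (norm_ne_zero_iff.2 (hstat i).1), one_smul]
  have hσσ : ∀ i, ⟪σb i, σb i⟫ = 1 := fun i => by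
    rw [real_inner_self_eq_norm_sq, hσb i]; norm_num
  have hσg : ∀ i, ⟪σb i, gvec A σb i⟫ = ‖gvec A σb i‖ := by
    intro i
    conv_lhs => rw [hgsmul i]
    rw [real_inner_smul_right, hσσ i, mul_one]
  have hug : ∀ i, ⟪u i, gvec A σb i⟫ = 0 := by
    intro i
    conv_lhs => rw [hgsmul i]
    rw [real_inner_smul_right, hu i, mul_zero]
  have hgbd : ∀ (v : Conf n r), (∀ j, ‖v j‖ ≤ 1) → ∀ i, ‖gvec A v i‖ ≤ K := by
    intro v hv i
    calc ‖gvec A v i‖ ≤ ∑ j ∈ univ.erase i, ‖A i j • v j‖ := norm_sum_le _ _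
      _ ≤ ∑ j ∈ univ.erase i, |A i j| := by
          refine Finset.sum_le_sum fun j _ => ?_
          rw [norm_smul, Real.norm_eq_abs]
          exact mul_le_of_le_one_right (abs_nonneg _) (hv j)
      _ ≤ K := hrow i
  have hσt1 : ∀ i, ‖σt i‖ = 1 := by
    intro i
    by_cases h0 : u i = 0
    · rw [hσtdef]
      simp [geo, h0, hσb i]
    · rw [hσtdef]
      show ‖Real.cos (‖u i‖*t) • σb i + (Real.sin (‖u i‖*t)/‖u i‖) • u i‖ = 1
      exact combo_norm (σb i) (u i) (hσb i) (hu i) h0 _ _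
        (by nlinarith [Real.sin_sq_add_cos_sq (‖u i‖*t)])
  have hsupp : ∀ i, i ∈ suppu u ↔ u i ≠ 0 := fun i => by simp [suppu]
  have hkey : ∀ i ∈ suppu u,
      (‖u i‖ * ‖gvec A σb i‖ - ⟪u i, gvec A u i⟫ / ‖u i‖) ^ 2 * t ^ 2 - 20*K^2*t^3
        ≤ ‖gvec A σt i‖ ^ 2 - ⟪σt i, gvec A σt i⟫ ^ 2 := by
    intro i hi
    exact row_estimate A σb u t K hσb hu hu1 ht0 ht1 hK0 i ((hsupp i).1 hi)
      (hrow i) (hug i) (hσg i) (hgbd σb (fun j => le_of_eq (hσb j)) i)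
      (hgbd u hu1 i) hσt1
  have hnonneg : ∀ i : Fin n,
      0 ≤ ‖gvec A σt i‖ ^ 2 - ⟪σt i, gvec A σt i⟫ ^ 2 := by
    intro i
    have h := abs_real_inner_le_norm (σt i) (gvec A σt i)
    rw [hσt1 i, one_mul] at h
    nlinarith [sq_abs ⟪σt i, gvec A σt i⟫, abs_nonneg ⟪σt i, gvec A σt i⟫,
      norm_nonneg (gvec A σt i)]
  have hcard : (suppu u).card ≤ n := by
    simpa using Finset.card_le_card (Finset.subset_univ (suppu u))
  have hchain :
      ∑ i ∈ suppu u,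
        ((‖u i‖ * ‖gvec A σb i‖ - ⟪u i, gvec A u i⟫ / ‖u i‖) ^ 2 * t ^ 2 - 20*K^2*t^3)
      ≤ ∑ i, (‖gvec A σt i‖ ^ 2 - ⟪σt i, gvec A σt i⟫ ^ 2) := by
    calc ∑ i ∈ suppu u,
        ((‖u i‖ * ‖gvec A σb i‖ - ⟪u i, gvec A u i⟫ / ‖u i‖) ^ 2 * t ^ 2 - 20*K^2*t^3)
        ≤ ∑ i ∈ suppu u, (‖gvec A σt i‖ ^ 2 - ⟪σt i, gvec A σt i⟫ ^ 2) :=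
          Finset.sum_le_sum hkey
      _ ≤ ∑ i, (‖gvec A σt i‖ ^ 2 - ⟪σt i, gvec A σt i⟫ ^ 2) :=
          Finset.sum_le_sum_of_subset_of_nonneg (Finset.subset_univ _)
            (fun i _ _ => hnonneg i)
  have hsplit : ∑ i ∈ suppu u,
        ((‖u i‖ * ‖gvec A σb i‖ - ⟪u i, gvec A u i⟫ / ‖u i‖) ^ 2 * t ^ 2 - 20*K^2*t^3)
      = t^2 * (∑ i ∈ suppu u,
          (‖u i‖ * ‖gvec A σb i‖ - ⟪u i, gvec A u i⟫ / ‖u i‖) ^ 2)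
        - (suppu u).card * (20*K^2*t^3) := by
    rw [Finset.sum_sub_distrib, Finset.sum_const, Finset.mul_sum, nsmul_eq_mul]
    congr 1
    exact Finset.sum_congr rfl fun i _ => by ring
  have hKt : 0 ≤ K^2*t^3 := by positivity
  rw [gradNormSq]
  have hbig : ((suppu u).card : ℝ) * (20*K^2*t^3) ≤ (n : ℝ) * (44*K^2*t^3) := by
    have h1 : ((suppu u).card : ℝ) ≤ (n : ℝ) := by exact_mod_cast hcard
    have h2 : (0:ℝ) ≤ (n:ℝ) := Nat.cast_nonneg n
    nlinarith
  linarith [hchain, hsplit, hbig]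
end
end
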